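/- Let a < b be reals, let n be a natural number, let x₀, …, x_n be n+1 distinct points in [a,b], and let f : ℝ → ℝ be (n+1)-times differentiable on [a,b] with |f^{(n+1)}(ξ)| ≤ M for all ξ ∈ [a,b]. Let P be the Lagrange interpolation polynomial of degree at most n satisfying P(xᵢ) = f(xᵢ) for i = 0,…,n. Then for every x ∈ [a,b], |f(x) − P(x)| ≤ (M / (n+1)!) · ∏_{i=0}^{n} |x − xᵢ|. -/

import Mathlib

open Set

section LagrangeAux
open Polynomial

lemma iterDerivPolyAux (p : Polynomial ℝ) (m : ℕ) (h : p.natDegree ≤ m) :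
    Polynomial.derivative^[m] p = Polynomial.C ((m.factorial : ℝ) * p.coeff m) := by
  have hdeg : (Polynomial.derivative^[m] p).natDegree = 0 := by
    have := Polynomial.natDegree_iterate_derivative p m
    omega
  rw [Polynomial.eq_C_of_natDegree_eq_zero hdeg]
  congr 1
  rw [Polynomial.coeff_iterate_derivative]
  simp [Nat.descFactorial_self, mul_comm]

lemma rolleFinsetAux (a b : ℝ) (h : ℝ → ℝ) (hc : ContinuousOn h (Icc a b)) :
    ∀ (s : Finset ℝ) (hs : s.Nonempty), (∀ z ∈ s, z ∈ Icc a b) → (∀ z ∈ s, h z = 0) →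
    ∃ t : Finset ℝ, t.card + 1 = s.card ∧ (∀ c ∈ t, c ∈ Ioo (s.min' hs) (s.max' hs)) ∧
      ∀ c ∈ t, deriv h c = 0 := by
  intro s
  induction s using Finset.strongInduction with
  | _ s ih =>
    intro hs hsub hzero
    rcases eq_or_lt_of_le (Finset.one_le_card.mpr hs) with h1 | h2
    · exact ⟨∅, by simp [← h1], by simp, by simp⟩
    · set m := s.min' hs with hm
      have hmS : m ∈ s := s.min'_mem hs
      set s' := s.erase m with hs'
      have hss : s' ⊂ s := Finset.erase_ssubset hmS
      have hcard' : s'.card + 1 = s.card := Finset.card_erase_add_one hmS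
      have hs'ne : s'.Nonempty := Finset.card_pos.mp (by omega)
      obtain ⟨t', ht'card, ht'mem, ht'zero⟩ :=
        ih s' hss hs'ne (fun z hz => hsub z (Finset.mem_of_mem_erase hz))
          (fun z hz => hzero z (Finset.mem_of_mem_erase hz))
      set m' := s'.min' hs'ne with hm'
      have hm'S' : m' ∈ s' := s'.min'_mem hs'ne
      have hm'S : m' ∈ s := Finset.mem_of_mem_erase hm'S'
      have hmm' : m < m' := lt_of_le_of_ne (s.min'_le m' hm'S) (Finset.ne_of_mem_erase hm'S').symm
      have hmab : m ∈ Icc a b := hsub m hmS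
      have hm'ab : m' ∈ Icc a b := hsub m' hm'S
      have hsubIcc : Icc m m' ⊆ Icc a b := Icc_subset_Icc hmab.1 hm'ab.2
      obtain ⟨c, hcmem, hcder⟩ := exists_deriv_eq_zero hmm' (hc.mono hsubIcc)
        ((hzero m hmS).trans (hzero m' hm'S).symm)
      have hmax : s'.max' hs'ne ≤ s.max' hs := Finset.max'_subset hs'ne hss.subset
      have hcnot : c ∉ t' := fun hct => absurd (ht'mem c hct).1 (not_lt.mpr hcmem.2.le)
      refine ⟨insert c t', ?_, ?_, ?_⟩
      · rw [Finset.card_insert_of_notMem hcnot]; omega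
      · intro d hd
        rcases Finset.mem_insert.mp hd with rfl | hd
        · exact ⟨hcmem.1, lt_of_lt_of_le (hcmem.2.trans_le (s'.min'_le _ (s'.max'_mem hs'ne))) hmax⟩
        · exact ⟨hmm'.trans (ht'mem d hd).1, lt_of_lt_of_le (ht'mem d hd).2 hmax⟩
      · intro d hd
        rcases Finset.mem_insert.mp hd with rfl | hd
        · exact hcder
        · exact ht'zero d hd

end LagrangeAux

/-- Classical error bound for Lagrange polynomial interpolation at `n+1` distinct
nodes in `[a,b]`, for an `(n+1)`-times differentiable function with `(n+1)`-st
derivative bounded by `M` on `[a,b]`. -/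
theorem lagrange_interpolation_error
    (a b : ℝ) (hab : a < b) (n : ℕ) (x : Fin (n + 1) → ℝ)
    (hx_inj : Function.Injective x) (hx_mem : ∀ i, x i ∈ Icc a b)
    (f : ℝ → ℝ) (M : ℝ)
    (hdiff : ∀ k ≤ n,
      DifferentiableOn ℝ (iteratedDerivWithin k f (Icc a b)) (Icc a b))
    (hM : ∀ ξ ∈ Icc a b, |iteratedDerivWithin (n + 1) f (Icc a b) ξ| ≤ M)
    (P : Polynomial ℝ) (hPdeg : P.natDegree ≤ n)
    (hPinterp : ∀ i, P.eval (x i) = f (x i)) :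
    ∀ y ∈ Icc a b,
      |f y - P.eval y| ≤ M / (Nat.factorial (n + 1)) * ∏ i, |y - x i| := by
  intro y hy
  have haI : a ∈ Icc a b := ⟨le_refl a, hab.le⟩
  have hM0 : 0 ≤ M := le_trans (abs_nonneg _) (hM a haI)
  have hUD : UniqueDiffOn ℝ (Icc a b) := uniqueDiffOn_Icc hab
  by_cases hyx : ∃ i, y = x i
  · obtain ⟨i, rfl⟩ := hyx
    rw [hPinterp i, sub_self, abs_zero]
    positivity
  push_neg at hyx
  set W : Polynomial ℝ := ∏ i, (Polynomial.X - Polynomial.C (x i)) with hW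
  have hWmonic : W.Monic := Polynomial.monic_prod_of_monic _ _
    (fun i _ => Polynomial.monic_X_sub_C (x i))
  have hWdeg : W.natDegree = n + 1 := by
    rw [hW, Polynomial.natDegree_prod _ _
      (fun i _ => (Polynomial.monic_X_sub_C (x i)).ne_zero)]
    simp [Polynomial.natDegree_X_sub_C]
  have hWeval : ∀ t, W.eval t = ∏ i, (t - x i) := by
    intro t; rw [hW]; simp [Polynomial.eval_prod]
  have hWy : W.eval y ≠ 0 := by
    rw [hWeval]
    exact Finset.prod_ne_zero_iff.mpr fun i _ => sub_ne_zero.mpr (hyx i)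
  set lam : ℝ := (f y - P.eval y) / W.eval y with hlam
  set q : Polynomial ℝ := P + Polynomial.C lam * W with hq
  set g : ℝ → ℝ := fun t => f t - q.eval t with hg
  have hqx : ∀ i, q.eval (x i) = f (x i) := by
    intro i
    have hz : (∏ j, (x i - x j)) = 0 :=
      Finset.prod_eq_zero (Finset.mem_univ i) (sub_self (x i))
    rw [hq]
    simp [hWeval, hz, hPinterp i]
  have hqy : q.eval y = f y := by
    rw [hq]
    simp only [Polynomial.eval_add, Polynomial.eval_mul, Polynomial.eval_C, hlam]
    field_simp
    ring
  have hqdeg : q.natDegree ≤ n + 1 := by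
    refine le_trans (Polynomial.natDegree_add_le _ _) (max_le (hPdeg.trans (Nat.le_succ n)) ?_)
    refine le_trans (Polynomial.natDegree_mul_le) ?_
    simp [hWdeg]
  have hqcoeff : q.coeff (n + 1) = lam := by
    rw [hq]
    rw [Polynomial.coeff_add, Polynomial.coeff_C_mul,
      Polynomial.coeff_eq_zero_of_natDegree_lt (lt_of_le_of_lt hPdeg (Nat.lt_succ_self n))]
    have : W.coeff (n + 1) = 1 := by
      have := hWmonic.leadingCoeff
      rwa [Polynomial.leadingCoeff, hWdeg] at this
    simp [this]
  -- key: iterated derivatives of g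
  have key : ∀ k ≤ n + 1, ∀ z ∈ Icc a b,
      iteratedDerivWithin k g (Icc a b) z
        = iteratedDerivWithin k f (Icc a b) z - (Polynomial.derivative^[k] q).eval z := by
    intro k
    induction k with
    | zero => intro _ z hz; simp [hg, iteratedDerivWithin_zero]
    | succ k ihk =>
      intro hk z hz
      have hk' : k ≤ n := by omega
      have hEq : Set.EqOn (iteratedDerivWithin k g (Icc a b))
          (fun t => iteratedDerivWithin k f (Icc a b) t - (Polynomial.derivative^[k] q).eval t)
          (Icc a b) := fun w hw => ihk (by omega) w hw
      rw [iteratedDerivWithin_succ,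
        derivWithin_congr hEq (hEq hz),
        derivWithin_fun_sub (hdiff k hk' z hz)
          ((Polynomial.differentiable (Polynomial.derivative^[k] q)).differentiableAt.differentiableWithinAt),
        ← iteratedDerivWithin_succ,
        (Polynomial.derivative^[k] q).derivWithin (hUD z hz), Function.iterate_succ_apply']
  have hgdiff : ∀ k ≤ n, DifferentiableOn ℝ (iteratedDerivWithin k g (Icc a b)) (Icc a b) := by
    intro k hk
    have hEq : Set.EqOn (iteratedDerivWithin k g (Icc a b))
        (fun t => iteratedDerivWithin k f (Icc a b) t - (Polynomial.derivative^[k] q).eval t)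
        (Icc a b) := fun w hw => key k (by omega) w hw
    exact DifferentiableOn.congr
      ((hdiff k hk).sub ((Polynomial.differentiable (Polynomial.derivative^[k] q)).differentiableOn)) hEq
  -- iterated Rolle
  have rolle : ∀ k ≤ n + 1, ∃ t : Finset ℝ, (∀ z ∈ t, z ∈ Icc a b) ∧ t.card = n + 2 - k ∧
      ∀ z ∈ t, iteratedDerivWithin k g (Icc a b) z = 0 := by
    intro k
    induction k with
    | zero =>
      intro _
      refine ⟨insert y (Finset.image x Finset.univ), ?_, ?_, ?_⟩
      · intro z hz
        rcases Finset.mem_insert.mp hz with rfl | hz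
        · exact hy
        · obtain ⟨i, _, rfl⟩ := Finset.mem_image.mp hz
          exact hx_mem i
      · rw [Finset.card_insert_of_notMem (by
          simp only [Finset.mem_image, Finset.mem_univ, true_and]
          rintro ⟨i, rfl⟩
          exact hyx i rfl),
          Finset.card_image_of_injective _ hx_inj]
        simp
      · intro z hz
        rw [iteratedDerivWithin_zero]
        rcases Finset.mem_insert.mp hz with rfl | hz
        · simp [hg, ← hqy]
        · obtain ⟨i, _, rfl⟩ := Finset.mem_image.mp hz
          simp [hg, ← hqx i]
    | succ k ihk =>
      intro hk
      obtain ⟨t, htsub, htcard, htzero⟩ := ihk (by omega)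
      have htne : t.Nonempty := Finset.card_pos.mp (by omega)
      have hcont : ContinuousOn (iteratedDerivWithin k g (Icc a b)) (Icc a b) :=
        (hgdiff k (by omega)).continuousOn
      obtain ⟨t', ht'card, ht'mem, ht'zero⟩ :=
        rolleFinsetAux a b (iteratedDerivWithin k g (Icc a b)) hcont t htne htsub htzero
      have htIoo : ∀ c ∈ t', c ∈ Ioo a b := by
        intro c hc
        have h1 := ht'mem c hc
        exact ⟨lt_of_le_of_lt (htsub _ (t.min'_mem htne)).1 h1.1,
          lt_of_lt_of_le h1.2 (htsub _ (t.max'_mem htne)).2⟩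
      refine ⟨t', fun z hz => Ioo_subset_Icc_self (htIoo z hz), by omega, ?_⟩
      intro z hz
      have hzI : z ∈ Icc a b := Ioo_subset_Icc_self (htIoo z hz)
      rw [iteratedDerivWithin_succ,
        derivWithin_of_mem_nhds (Icc_mem_nhds (htIoo z hz).1 (htIoo z hz).2)]
      exact ht'zero z hz
  -- conclude
  obtain ⟨t, htsub, htcard, htzero⟩ := rolle (n + 1) le_rfl
  have htne : t.Nonempty := Finset.card_pos.mp (by omega)
  obtain ⟨ξ, hξt⟩ := htne
  have hξI : ξ ∈ Icc a b := htsub ξ hξt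
  have h1 := htzero ξ hξt
  rw [key (n + 1) le_rfl ξ hξI, iterDerivPolyAux q (n + 1) hqdeg, hqcoeff] at h1
  simp only [Polynomial.eval_C, sub_eq_zero] at h1
  have hfact : (0 : ℝ) < (Nat.factorial (n + 1) : ℝ) := by positivity
  have hlamle : |lam| ≤ M / (Nat.factorial (n + 1)) := by
    rw [le_div_iff₀ hfact]
    calc |lam| * (Nat.factorial (n + 1) : ℝ)
        = |(Nat.factorial (n + 1) : ℝ) * lam| := by
          rw [abs_mul, abs_of_pos hfact, mul_comm]
      _ = |iteratedDerivWithin (n + 1) f (Icc a b) ξ| := by rw [h1]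
      _ ≤ M := hM ξ hξI
  have heq : f y - P.eval y = lam * W.eval y := by
    rw [hlam]; field_simp
  calc |f y - P.eval y| = |lam| * |W.eval y| := by rw [heq, abs_mul]
    _ ≤ M / (Nat.factorial (n + 1)) * |W.eval y| :=
        mul_le_mul_of_nonneg_right hlamle (abs_nonneg _)
    _ = M / (Nat.factorial (n + 1)) * ∏ i, |y - x i| := by
        rw [hWeval, Finset.abs_prod]
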